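/- Let B₂⁺ = B(x₀,2R) ∩ ℝⁿ₊ with x₀ ∈ closure(ℝⁿ₊), T = {xₙ = 0}, and let x* = (x', −xₙ) denote reflection. Define D = B₂⁺ ∪ B₂⁻ ∪ (B₂ ∩ T) where B₂⁻ = {x* : x ∈ B₂⁺}. If α : B₂⁺ ∪ (B₂ ∩ T) → (0,1] is log-Hölder continuous with constant M and 0 < α⁻ ≤ α⁺ < 1, then the reflected exponent α*(x), defined by α*(x) = α(x) for x ∈ B₂⁺ ∪ (B₂ ∩ T) and α*(x) = α(x*) for x ∈ B₂⁻, is log-Hölder continuous on D with constant at most max{M, 2α⁺ · max{ln 2, ln(2·diam D)}}. -/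

import Mathlib

open Real Set Metric

noncomputable section

/-- The half-space reflection `x ↦ x* = (x', -xₙ)` in `ℝ^{n+1}`. -/
def reflPt {n : ℕ} (x : EuclideanSpace ℝ (Fin (n + 1))) : EuclideanSpace ℝ (Fin (n + 1)) :=
  (WithLp.equiv 2 (Fin (n + 1) → ℝ)).symm fun j => if j = Fin.last n then -(x j) else x j

lemma reflPt_apply {n : ℕ} (x : EuclideanSpace ℝ (Fin (n + 1))) (j : Fin (n+1)) :
    reflPt x j = if j = Fin.last n then -(x j) else x j := rfl

lemma reflPt_reflPt {n : ℕ} (x : EuclideanSpace ℝ (Fin (n + 1))) : reflPt (reflPt x) = x := by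
  ext j
  simp [reflPt_apply]
  split <;> simp

lemma norm_sub_eq {n : ℕ} (x y : EuclideanSpace ℝ (Fin (n + 1))) :
    ‖x - y‖ = Real.sqrt (∑ j, (x j - y j)^2) := by
  rw [EuclideanSpace.norm_eq]
  congr 1
  apply Finset.sum_congr rfl
  intro j _
  rw [Real.norm_eq_abs, sq_abs]
  rfl

lemma norm_reflPt_sub {n : ℕ} (x y : EuclideanSpace ℝ (Fin (n + 1))) :
    ‖reflPt x - reflPt y‖ = ‖x - y‖ := by
  rw [norm_sub_eq, norm_sub_eq]
  congr 1
  apply Finset.sum_congr rfl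
  intro j _
  simp only [reflPt_apply]
  split <;> ring

lemma key_ineq {n : ℕ} (x v : EuclideanSpace ℝ (Fin (n + 1)))
    (hx : 0 ≤ x (Fin.last n)) (hv : 0 ≤ v (Fin.last n)) :
    ‖x - v‖ ≤ ‖x - reflPt v‖ := by
  rw [norm_sub_eq, norm_sub_eq]
  apply Real.sqrt_le_sqrt
  rw [← Finset.sum_erase_add _ _ (Finset.mem_univ (Fin.last n)),
      ← Finset.sum_erase_add _ _ (Finset.mem_univ (Fin.last n))]
  refine add_le_add (le_of_eq (Finset.sum_congr rfl fun j hj => ?_)) ?_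
  · rw [Finset.mem_erase] at hj
    simp [reflPt_apply, hj.1]
  · simp only [reflPt_apply, if_pos rfl, if_true, eq_self_iff_true, sub_neg_eq_add]
    nlinarith [mul_nonneg hx hv]

/-- `B₂ = B(x₀, 2R)`. -/
def ballB {n : ℕ} (x₀ : EuclideanSpace ℝ (Fin (n + 1))) (R : ℝ) :
    Set (EuclideanSpace ℝ (Fin (n + 1))) := Metric.ball x₀ (2 * R)

/-- `B₂⁺ = B₂ ∩ ℝⁿ₊`. -/
def upperPart {n : ℕ} (x₀ : EuclideanSpace ℝ (Fin (n + 1))) (R : ℝ) :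
    Set (EuclideanSpace ℝ (Fin (n + 1))) := ballB x₀ R ∩ {x | 0 < x (Fin.last n)}

/-- `B₂ ∩ T` where `T = {xₙ = 0}`. -/
def flatPart {n : ℕ} (x₀ : EuclideanSpace ℝ (Fin (n + 1))) (R : ℝ) :
    Set (EuclideanSpace ℝ (Fin (n + 1))) := ballB x₀ R ∩ {x | x (Fin.last n) = 0}

/-- `D = B₂⁺ ∪ B₂⁻ ∪ (B₂ ∩ T)`. -/
def reflDom {n : ℕ} (x₀ : EuclideanSpace ℝ (Fin (n + 1))) (R : ℝ) :
    Set (EuclideanSpace ℝ (Fin (n + 1))) :=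
  upperPart x₀ R ∪ reflPt '' upperPart x₀ R ∪ flatPart x₀ R

/-- The reflected exponent `α*`. -/
def alphaStar {n : ℕ} (α : EuclideanSpace ℝ (Fin (n + 1)) → ℝ)
    (x : EuclideanSpace ℝ (Fin (n + 1))) : ℝ :=
  if 0 ≤ x (Fin.last n) then α x else α (reflPt x)

theorem stmt_2 {n : ℕ} (x₀ : EuclideanSpace ℝ (Fin (n + 1))) (R : ℝ) (hR : 0 < R)
    (hx₀ : 0 ≤ x₀ (Fin.last n))
    (α : EuclideanSpace ℝ (Fin (n + 1)) → ℝ) (αm αp M : ℝ)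
    (hαm : 0 < αm) (hαp : αp < 1)
    (hα : ∀ x ∈ upperPart x₀ R ∪ flatPart x₀ R, αm ≤ α x ∧ α x ≤ αp)
    (hα01 : ∀ x ∈ upperPart x₀ R ∪ flatPart x₀ R, α x ∈ Set.Ioc (0 : ℝ) 1)
    (hlog : ∀ x ∈ upperPart x₀ R ∪ flatPart x₀ R, ∀ y ∈ upperPart x₀ R ∪ flatPart x₀ R,
      x ≠ y → |α x - α y| * |Real.log ‖x - y‖| ≤ M) :
    ∀ x ∈ reflDom x₀ R, ∀ y ∈ reflDom x₀ R, x ≠ y →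
      |alphaStar α x - alphaStar α y| * |Real.log ‖x - y‖| ≤
        max M (2 * αp * max (Real.log 2) (Real.log (2 * Metric.diam (reflDom x₀ R)))) := by
  -- abbreviations
  set S := upperPart x₀ R ∪ flatPart x₀ R with hS
  set RHS := max M (2 * αp * max (Real.log 2) (Real.log (2 * Metric.diam (reflDom x₀ R)))) with hRHS
  -- x₀ ∈ S
  have hx0mem : x₀ ∈ S := by
    have hball : x₀ ∈ ballB x₀ R := Metric.mem_ball_self (by linarith)
    rcases lt_or_eq_of_le hx₀ with h | h
    · exact Or.inl ⟨hball, h⟩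
    · exact Or.inr ⟨hball, h.symm⟩
  have hαp_pos : 0 < αp := lt_of_lt_of_le hαm ((hα x₀ hx0mem).1.trans (hα x₀ hx0mem).2)
  have hlog2 : (0:ℝ) < Real.log 2 := Real.log_pos (by norm_num)
  have hRHS_nonneg : 0 ≤ RHS := by
    have : 0 ≤ 2 * αp * max (Real.log 2) (Real.log (2 * Metric.diam (reflDom x₀ R))) := by
      apply mul_nonneg (by linarith)
      exact le_trans hlog2.le (le_max_left _ _)
    exact le_trans this (le_max_right _ _)
  -- boundedness & diameter
  have hsub : reflDom x₀ R ⊆ Metric.ball x₀ (2*R) ∪ Metric.ball (reflPt x₀) (2*R) := by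
    rintro z ((hz | ⟨v, hv, rfl⟩) | hz)
    · exact Or.inl hz.1
    · refine Or.inr ?_
      have : dist (reflPt v) (reflPt x₀) = dist v x₀ := by
        rw [dist_eq_norm, dist_eq_norm, norm_reflPt_sub]
      rw [Metric.mem_ball, this]
      exact hv.1
    · exact Or.inl hz.1
  have hbdd : Bornology.IsBounded (reflDom x₀ R) :=
    (Metric.isBounded_ball.union Metric.isBounded_ball).subset hsub
  -- classification of points of D
  have classify : ∀ z ∈ reflDom x₀ R,
      (z ∈ S ∧ 0 ≤ z (Fin.last n)) ∨ (reflPt z ∈ upperPart x₀ R ∧ z (Fin.last n) < 0) := by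
    rintro z ((hz | ⟨v, hv, rfl⟩) | hz)
    · exact Or.inl ⟨Or.inl hz, hz.2.le⟩
    · refine Or.inr ⟨by rw [reflPt_reflPt]; exact hv, ?_⟩
      have h2 := hv.2
      simp only [reflPt_apply, if_pos rfl, if_true, eq_self_iff_true]
      simpa using h2
    · exact Or.inl ⟨Or.inr hz, le_of_eq hz.2.symm⟩
  intro x hx y hy hxy
  have hxy_pos : 0 < ‖x - y‖ := by
    rw [norm_pos_iff, sub_ne_zero]; exact hxy
  have hxy_diam : ‖x - y‖ ≤ Metric.diam (reflDom x₀ R) := by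
    rw [← dist_eq_norm]; exact Metric.dist_le_diam_of_mem hbdd hx hy
  -- produce u v ∈ S representing the values with smaller distance
  obtain ⟨u, v, huS, hvS, hval, hdist⟩ :
      ∃ u v, u ∈ S ∧ v ∈ S ∧ |alphaStar α x - alphaStar α y| = |α u - α v| ∧
        ‖u - v‖ ≤ ‖x - y‖ := by
    rcases classify x hx with ⟨hxS, hxn⟩ | ⟨hxr, hxn⟩ <;>
      rcases classify y hy with ⟨hyS, hyn⟩ | ⟨hyr, hyn⟩
    · exact ⟨x, y, hxS, hyS, by rw [alphaStar, alphaStar, if_pos hxn, if_pos hyn], le_refl _⟩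
    · refine ⟨x, reflPt y, hxS, Or.inl hyr, ?_, ?_⟩
      · rw [alphaStar, alphaStar, if_pos hxn, if_neg (not_le.mpr hyn)]
      · have := key_ineq x (reflPt y) hxn hyr.2.le
        rwa [reflPt_reflPt] at this
    · refine ⟨reflPt x, y, Or.inl hxr, hyS, ?_, ?_⟩
      · rw [alphaStar, alphaStar, if_neg (not_le.mpr hxn), if_pos hyn]
      · have := key_ineq y (reflPt x) hyn hxr.2.le
        rw [reflPt_reflPt] at this
        rw [norm_sub_rev, norm_sub_rev x y]
        exact this
    · refine ⟨reflPt x, reflPt y, Or.inl hxr, Or.inl hyr, ?_, le_of_eq (norm_reflPt_sub x y)⟩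
      rw [alphaStar, alphaStar, if_neg (not_le.mpr hxn), if_neg (not_le.mpr hyn)]
  rw [hval]
  by_cases huv : u = v
  · rw [huv, sub_self, abs_zero, zero_mul]; exact hRHS_nonneg
  have hc_nonneg : (0:ℝ) ≤ |α u - α v| := abs_nonneg _
  have huv_pos : 0 < ‖u - v‖ := by rw [norm_pos_iff, sub_ne_zero]; exact huv
  rcases le_or_gt ‖x - y‖ 1 with hb1 | hb1
  · -- small distance: use log-Hölder on S
    have h1 : |Real.log ‖x - y‖| ≤ |Real.log ‖u - v‖| := by
      rw [abs_of_nonpos (Real.log_nonpos hxy_pos.le hb1),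
          abs_of_nonpos (Real.log_nonpos huv_pos.le (hdist.trans hb1))]
      have := Real.log_le_log huv_pos hdist
      linarith
    calc |α u - α v| * |Real.log ‖x - y‖| ≤ |α u - α v| * |Real.log ‖u - v‖| :=
          mul_le_mul_of_nonneg_left h1 hc_nonneg
      _ ≤ M := hlog u huS v hvS huv
      _ ≤ RHS := le_max_left _ _
  · -- large distance: use diameter bound
    have hcle : |α u - α v| ≤ αp := by
      have h1 := hα u huS
      have h2 := hα v hvS
      rw [abs_sub_le_iff]
      constructor <;> linarith
    have hlb : Real.log ‖x - y‖ ≤ Real.log (2 * Metric.diam (reflDom x₀ R)) := by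
      apply Real.log_le_log hxy_pos
      have hd : 0 ≤ Metric.diam (reflDom x₀ R) := Metric.diam_nonneg
      linarith
    have hlb_pos : 0 < Real.log ‖x - y‖ := Real.log_pos hb1
    have hmaxpos : Real.log ‖x - y‖ ≤ max (Real.log 2) (Real.log (2 * Metric.diam (reflDom x₀ R))) :=
      le_trans hlb (le_max_right _ _)
    calc |α u - α v| * |Real.log ‖x - y‖|
        = |α u - α v| * Real.log ‖x - y‖ := by rw [abs_of_pos hlb_pos]
      _ ≤ αp * max (Real.log 2) (Real.log (2 * Metric.diam (reflDom x₀ R))) := by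
          apply mul_le_mul hcle hmaxpos hlb_pos.le hαp_pos.le
      _ ≤ 2 * αp * max (Real.log 2) (Real.log (2 * Metric.diam (reflDom x₀ R))) := by
          apply mul_le_mul_of_nonneg_right (by linarith) (le_trans hlb_pos.le hmaxpos)
      _ ≤ RHS := le_max_right _ _
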